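/- arXiv:2403.00737 — 4 statements merged into one kernel-verified Lean document; each statement's English description precedes it below -/
import Mathlib

section
/- Let p₁, …, pₙ be distinct points of ℝ² in general position such that p₁ is an extreme point of the convex hull of {p₁, …, pₙ} and p₂, …, pₙ appear in counterclockwise angular order around p₁, i.e., for all indices 2 ≤ a < b ≤ n the triple (p₁, p_a, p_b) is positively oriented. Then there exist points p̃₁, …, p̃ₙ in ℝ² whose x-coordinates are strictly increasing (the x-coordinate of p̃ᵢ is strictly less than that of p̃ⱼ whenever i < j) such that for all 1 ≤ a < b < c ≤ n the triple (p̃_a, p̃_b, p̃_c) is positively oriented if and only if (p_a, p_b, p_c) is positively oriented. -/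
/-- Orientation determinant of three points in the plane:
`det [[1,1,1],[pₓ,qₓ,rₓ],[p_y,q_y,r_y]]`.
The triple `(p,q,r)` is positively oriented iff `det3 p q r > 0`,
and negatively oriented iff `det3 p q r < 0`. -/
noncomputable def det3 (p q r : ℝ × ℝ) : ℝ :=
  Matrix.det !![(1:ℝ), 1, 1; p.1, q.1, r.1; p.2, q.2, r.2]

/-- A set of points in the plane is in general position if no three
distinct points of it are collinear. -/
def InGenPos (S : Set (ℝ × ℝ)) : Prop :=
  ∀ p ∈ S, ∀ q ∈ S, ∀ r ∈ S, p ≠ q → p ≠ r → q ≠ r →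
    ¬ Collinear ℝ ({p, q, r} : Set (ℝ × ℝ))

/-- `P` is a `k`-gon of `S`: a `k`-element subset of `S` in convex position,
i.e. every point of `P` is an extreme point of the convex hull of `P`. -/
def IsGon (k : ℕ) (S P : Set (ℝ × ℝ)) : Prop :=
  P ⊆ S ∧ P.Finite ∧ P.ncard = k ∧
    ∀ p ∈ P, p ∈ Set.extremePoints ℝ (convexHull ℝ P)

/-- `P` is a `k`-hole of `S`: a `k`-gon of `S` whose convex hull contains
no point of `S` other than the `k` points of `P`. -/
def IsHole (k : ℕ) (S P : Set (ℝ × ℝ)) : Prop :=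
  IsGon k S P ∧ ∀ q ∈ S, q ∈ convexHull ℝ P → q ∈ P

lemma det3_eq (p q r : ℝ × ℝ) :
    det3 p q r = (q.1-p.1)*(r.2-p.2)-(q.2-p.2)*(r.1-p.1) := by
  simp [det3, Matrix.det_fin_three]; ring

lemma det3_proj (a1 b1 a2 b2 a3 b3 : ℝ) (h1 : b1 ≠ 0) (h2 : b2 ≠ 0) (h3 : b3 ≠ 0) :
    det3 (a1/b1, 1/b1) (a2/b2, 1/b2) (a3/b3, 1/b3) =
      (a2*b1 - a3*b1 - a1*b2 + a1*b3 + a3*b2 - a2*b3)/(b1*b2*b3) := by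
  rw [det3_eq]; field_simp; ring

/-- If `p 1, …, p n` are distinct points in general position such that `p 1`
is extreme and `p 2, …, p n` appear counterclockwise around `p 1` (i.e. every
triple `(p 1, p a, p b)` with `2 ≤ a < b ≤ n` is positively oriented), then
there are points with strictly increasing x-coordinates realizing exactly the
same triple orientations. -/
theorem exists_x_sorted_realization (n : ℕ) (hn : 1 ≤ n) (p : ℕ → ℝ × ℝ)
    (hinj : Set.InjOn p (Set.Icc 1 n))
    (hgp : InGenPos (p '' Set.Icc 1 n))
    (hextreme : p 1 ∈ Set.extremePoints ℝ (convexHull ℝ (p '' Set.Icc 1 n)))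
    (hccw : ∀ a b : ℕ, 2 ≤ a → a < b → b ≤ n → det3 (p 1) (p a) (p b) > 0) :
    ∃ q : ℕ → ℝ × ℝ,
      (∀ i j : ℕ, 1 ≤ i → i < j → j ≤ n → (q i).1 < (q j).1) ∧
      (∀ a b c : ℕ, 1 ≤ a → a < b → b < c → c ≤ n →
        (det3 (q a) (q b) (q c) > 0 ↔ det3 (p a) (p b) (p c) > 0)) := by
  rcases le_or_gt n 2 with h2 | h3
  · refine ⟨fun i => ((i:ℝ), 0), ?_, ?_⟩
    · intro i j _ hij _
      simpa using (Nat.cast_lt.mpr hij : (i:ℝ) < (j:ℝ))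
    · intro a b c ha hab hbc hcn; omega
  -- main case n ≥ 3
  set w : ℝ × ℝ := ((p n).2 - (p 2).2, (p 2).1 - (p n).1) with hw
  set A : ℕ → ℝ := fun i => w.1 * ((p i).2 - (p 1).2) - w.2 * ((p i).1 - (p 1).1) with hA
  set B : ℕ → ℝ := fun i => w.1 * ((p i).1 - (p 1).1) + w.2 * ((p i).2 - (p 1).2) with hB
  have h2nccw : det3 (p 1) (p 2) (p n) > 0 := hccw 2 n le_rfl h3 le_rfl
  have hBpos : ∀ i, 2 ≤ i → i ≤ n → 0 < B i := by
    intro i h2i hin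
    have hid : B i = det3 (p 1) (p 2) (p i) + det3 (p 1) (p i) (p n) := by
      simp only [hB, hw, det3_eq]; ring
    rcases eq_or_lt_of_le h2i with h | h
    · subst h
      have hz : det3 (p 1) (p 2) (p 2) = 0 := by rw [det3_eq]; ring
      linarith
    · rcases eq_or_lt_of_le hin with h' | h'
      · subst h'
        have hz : det3 (p 1) (p i) (p i) = 0 := by rw [det3_eq]; ring
        linarith [hccw 2 i le_rfl h le_rfl]
      · linarith [hccw 2 i le_rfl h (le_of_lt h'), hccw i n h2i h' le_rfl]
  have hWnn : (0:ℝ) ≤ w.1 ^ 2 + w.2 ^ 2 := by positivity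
  have hWpos : (0:ℝ) < w.1 ^ 2 + w.2 ^ 2 := by
    rcases eq_or_lt_of_le hWnn with h | h
    · exfalso
      have h1 : w.1 = 0 := by nlinarith [sq_nonneg w.1, sq_nonneg w.2]
      have h2 : w.2 = 0 := by nlinarith [sq_nonneg w.1, sq_nonneg w.2]
      have hw1 : w.1 = (p n).2 - (p 2).2 := by rw [hw]
      have hw2 : w.2 = (p 2).1 - (p n).1 := by rw [hw]
      have e1 : (p n).2 = (p 2).2 := by rw [h1] at hw1; linarith
      have e2 : (p n).1 = (p 2).1 := by rw [h2] at hw2; linarith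
      rw [det3_eq, e1, e2] at h2nccw
      nlinarith [h2nccw]
    · exact h
  have hcross : ∀ a b : ℕ, A b * B a - A a * B b = (w.1^2 + w.2^2) * det3 (p 1) (p a) (p b) := by
    intro a b; simp only [hA, hB, det3_eq]; ring
  have hxlt : ∀ a b : ℕ, 2 ≤ a → a < b → b ≤ n → A a / B a < A b / B b := by
    intro a b h2a hab hbn
    have hBa := hBpos a h2a (by omega)
    have hBb := hBpos b (by omega) hbn
    rw [div_lt_div_iff₀ hBa hBb]
    have h1 := hcross a b
    have h2 := mul_pos hWpos (hccw a b h2a hab hbn)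
    linarith
  have htriple : ∀ a b c : ℕ, B a ≠ 0 → B b ≠ 0 → B c ≠ 0 →
      det3 (A a / B a, 1 / B a) (A b / B b, 1 / B b) (A c / B c, 1 / B c)
        = (w.1^2 + w.2^2) * det3 (p a) (p b) (p c) / (B a * B b * B c) := by
    intro a b c ha hb hc
    rw [det3_proj _ _ _ _ _ _ ha hb hc]
    congr 1
    simp only [hA, hB, det3_eq]
    ring
  -- choose X
  obtain ⟨j0, hj0s, hj0min⟩ := Finset.exists_min_image (Finset.Icc 2 n)
    (fun j => A j / B j) ⟨2, Finset.mem_Icc.mpr ⟨le_rfl, by omega⟩⟩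
  set X : ℝ := A j0 / B j0 - 1 with hX
  have hXlt : ∀ j, 2 ≤ j → j ≤ n → X < A j / B j := by
    intro j h2j hjn
    have := hj0min j (Finset.mem_Icc.mpr ⟨h2j, hjn⟩)
    linarith [this]
  -- choose Y
  set C : ℕ → ℕ → ℝ := fun a b =>
    (A a / B a) * (1 / B b) - (1 / B a) * (A b / B b) - X * (1 / B b - 1 / B a) with hC
  set D : ℕ → ℕ → ℝ := fun a b => A b / B b - A a / B a with hD
  obtain ⟨ab0, hab0s, hab0max⟩ := Finset.exists_max_image
    ((Finset.Icc 2 n) ×ˢ (Finset.Icc 2 n))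
    (fun ab => (1 - C ab.1 ab.2) / D ab.1 ab.2)
    ⟨(2, 2), Finset.mem_product.mpr ⟨Finset.mem_Icc.mpr ⟨le_rfl, by omega⟩,
      Finset.mem_Icc.mpr ⟨le_rfl, by omega⟩⟩⟩
  set Y : ℝ := (1 - C ab0.1 ab0.2) / D ab0.1 ab0.2 with hY
  have hYkey : ∀ a b : ℕ, 2 ≤ a → a < b → b ≤ n → 0 < Y * D a b + C a b := by
    intro a b h2a hab hbn
    have hDpos : 0 < D a b := by
      simp only [hD]; have := hxlt a b h2a hab hbn; linarith
    have hle : (1 - C a b) / D a b ≤ Y := hab0max (a, b)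
      (Finset.mem_product.mpr ⟨Finset.mem_Icc.mpr ⟨h2a, by omega⟩,
        Finset.mem_Icc.mpr ⟨by omega, hbn⟩⟩)
    have h1 : ((1 - C a b) / D a b) * D a b ≤ Y * D a b :=
      mul_le_mul_of_nonneg_right hle (le_of_lt hDpos)
    rw [div_mul_cancel₀ _ (ne_of_gt hDpos)] at h1
    linarith
  have hq1det : ∀ a b : ℕ,
      det3 (X, Y) (A a / B a, 1 / B a) (A b / B b, 1 / B b) = Y * D a b + C a b := by
    intro a b; rw [det3_eq]; simp only [hC, hD]; ring
  refine ⟨fun i => if i = 1 then (X, Y) else (A i / B i, 1 / B i), ?_, ?_⟩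
  · intro i j hi hij hjn
    have hj1 : j ≠ 1 := by omega
    by_cases hi1 : i = 1
    · subst hi1
      simp only [if_pos rfl, if_true, if_neg hj1]
      exact hXlt j (by omega) hjn
    · simp only [if_neg hi1, if_neg hj1]
      exact hxlt i j (by omega) hij hjn
  · intro a b c ha hab hbc hcn
    have hb1 : b ≠ 1 := by omega
    have hc1 : c ≠ 1 := by omega
    by_cases ha1 : a = 1
    · subst ha1
      simp only [if_pos rfl, if_true, if_neg hb1, if_neg hc1]
      refine iff_of_true ?_ (hccw b c (by omega) hbc hcn)
      rw [hq1det]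
      exact hYkey b c (by omega) hbc hcn
    · simp only [if_neg ha1, if_neg hb1, if_neg hc1]
      have hBa := hBpos a (by omega) (by omega)
      have hBb := hBpos b (by omega) (by omega)
      have hBc := hBpos c (by omega) hcn
      rw [htriple a b c (ne_of_gt hBa) (ne_of_gt hBb) (ne_of_gt hBc)]
      have hm : 0 < B a * B b * B c := by positivity
      rw [gt_iff_lt, lt_div_iff₀ hm, zero_mul, gt_iff_lt]
      constructor
      · intro h; exact pos_of_mul_pos_right h hWpos.le
      · intro h; exact mul_pos hWpos h
end

section
/- Every set of 5 points in the plane ℝ² in general position contains a 4-gon, i.e., four of the five points are in convex position. (Esther Klein's theorem, g(4) = 5.) -/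
/-- If `p` is not in the convex hull of a nonempty set `s`, then `p` is an
extreme point of the convex hull of `insert p s`. -/
lemma extremePoint_insert {p : ℝ × ℝ} {s : Set (ℝ × ℝ)} (hs : s.Nonempty)
    (hp : p ∉ convexHull ℝ s) :
    p ∈ Set.extremePoints ℝ (convexHull ℝ (insert p s)) := by
  rw [mem_extremePoints]
  refine ⟨subset_convexHull ℝ _ (Set.mem_insert _ _), ?_⟩
  intro x1 hx1 x2 hx2 hseg
  rw [convexHull_insert hs, mem_convexJoin] at hx1 hx2
  obtain ⟨p1, hp1, z1, hz1, hx1s⟩ := hx1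
  obtain ⟨p2, hp2, z2, hz2, hx2s⟩ := hx2
  rw [Set.mem_singleton_iff] at hp1 hp2
  rw [hp1] at hx1s
  rw [hp2] at hx2s
  obtain ⟨a1, b1, ha1, hb1, hab1, hx1e⟩ := hx1s
  obtain ⟨a2, b2, ha2, hb2, hab2, hx2e⟩ := hx2s
  obtain ⟨u, v, hu, hv, huv, hpe⟩ := hseg
  -- component equations
  have e11 : a1 * p.1 + b1 * z1.1 = x1.1 := by
    rw [← hx1e]; simp [smul_eq_mul]
  have e12 : a1 * p.2 + b1 * z1.2 = x1.2 := by
    rw [← hx1e]; simp [smul_eq_mul]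
  have e21 : a2 * p.1 + b2 * z2.1 = x2.1 := by
    rw [← hx2e]; simp [smul_eq_mul]
  have e22 : a2 * p.2 + b2 * z2.2 = x2.2 := by
    rw [← hx2e]; simp [smul_eq_mul]
  have pe1 : u * x1.1 + v * x2.1 = p.1 := by
    rw [← hpe]; simp [smul_eq_mul]
  have pe2 : u * x1.2 + v * x2.2 = p.2 := by
    rw [← hpe]; simp [smul_eq_mul]
  set c : ℝ := u * b1 + v * b2 with hc
  by_cases hc0 : c = 0
  · -- both b's are zero, so x1 = x2 = p
    have hb10 : b1 = 0 := by nlinarith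
    have hb20 : b2 = 0 := by nlinarith
    have ha11 : a1 = 1 := by linarith
    have ha21 : a2 = 1 := by linarith
    rw [ha11, hb10] at hx1e
    rw [ha21, hb20] at hx2e
    simp at hx1e hx2e
    exact ⟨hx1e.symm, hx2e.symm⟩
  · exfalso
    have hcpos : 0 < c := lt_of_le_of_ne (by positivity) (Ne.symm hc0)
    apply hp
    have hkey1 : c * p.1 = u * b1 * z1.1 + v * b2 * z2.1 := by
      linear_combination (-1 : ℝ) * pe1 - u * e11 - v * e21 + p.1 * u * hab1 +
        p.1 * v * hab2 + p.1 * huv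
    have hkey2 : c * p.2 = u * b1 * z1.2 + v * b2 * z2.2 := by
      linear_combination (-1 : ℝ) * pe2 - u * e12 - v * e22 + p.2 * u * hab1 +
        p.2 * v * hab2 + p.2 * huv
    have hmem : p ∈ segment ℝ z1 z2 := by
      refine ⟨u * b1 / c, v * b2 / c, by positivity, by positivity, by field_simp; exact hc.symm, ?_⟩
      have h1 : (u * b1 / c) * z1.1 + (v * b2 / c) * z2.1 = p.1 := by
        field_simp
        linear_combination -hkey1
      have h2 : (u * b1 / c) * z1.2 + (v * b2 / c) * z2.2 = p.2 := by
        field_simp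
        linear_combination -hkey2
      have : ((u * b1 / c) • z1 + (v * b2 / c) • z2) = p := by
        apply Prod.ext <;> simp [smul_eq_mul, h1, h2]
      exact this
    exact (convex_convexHull ℝ s).segment_subset hz1 hz2 hmem

/-- An extreme point of the convex hull of `S` is not in the convex hull of
`S` minus that point. -/
lemma extremePoint_not_mem_diff {S : Set (ℝ × ℝ)} {p : ℝ × ℝ}
    (hp : p ∈ Set.extremePoints ℝ (convexHull ℝ S)) :
    p ∉ convexHull ℝ (S \ {p}) := by
  intro h
  have h2 := (Convex.mem_extremePoints_iff_mem_diff_convexHull_diff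
    (convex_convexHull ℝ S)).1 hp
  have hsub : S \ {p} ⊆ convexHull ℝ S \ {p} :=
    fun x hx => ⟨subset_convexHull ℝ S hx.1, hx.2⟩
  exact h2.2 (convexHull_mono hsub h)

/-- Explicit convex combination from membership in the hull of three points. -/
lemma hull3_comb {a b c x : ℝ × ℝ} (hab : a ≠ b) (hac : a ≠ c) (hbc : b ≠ c)
    (hx : x ∈ convexHull ℝ ({a, b, c} : Set (ℝ × ℝ))) :
    ∃ wa wb wc : ℝ, 0 ≤ wa ∧ 0 ≤ wb ∧ 0 ≤ wc ∧ wa + wb + wc = 1 ∧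
      x = wa • a + wb • b + wc • c := by
  classical
  have hset : ((({a, b, c} : Finset (ℝ × ℝ))) : Set (ℝ × ℝ)) = {a, b, c} := by simp
  rw [← hset, Finset.convexHull_eq] at hx
  obtain ⟨w, hw0, hw1, hwx⟩ := hx
  rw [Finset.centerMass_eq_of_sum_1 _ _ hw1] at hwx
  have hanb : a ∉ ({b, c} : Finset (ℝ × ℝ)) := by simp [hab, hac]
  have hbnc : b ∉ ({c} : Finset (ℝ × ℝ)) := by simp [hbc]
  rw [Finset.sum_insert hanb, Finset.sum_insert hbnc, Finset.sum_singleton] at hwx hw1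
  refine ⟨w a, w b, w c, hw0 a (by simp), hw0 b (by simp), hw0 c (by simp), by linarith, ?_⟩
  rw [← hwx]; simp only [id_eq]; abel

/-- If the cross product vanishes, the three points are collinear. -/
lemma collinear_of_cross_zero {d e x : ℝ × ℝ} (hde : d ≠ e)
    (h : (e.1 - d.1) * (x.2 - d.2) - (e.2 - d.2) * (x.1 - d.1) = 0) :
    Collinear ℝ ({d, e, x} : Set (ℝ × ℝ)) := by
  rw [collinear_iff_exists_forall_eq_smul_vadd]
  refine ⟨d, e - d, ?_⟩
  intro pt hpt
  simp only [Set.mem_insert_iff, Set.mem_singleton_iff] at hpt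
  rcases hpt with rfl | rfl | rfl
  · refine ⟨0, ?_⟩
    simp
  · refine ⟨1, ?_⟩
    simp
  · by_cases h1 : e.1 - d.1 = 0
    · have h2 : e.2 - d.2 ≠ 0 := by
        intro h2
        apply hde
        apply Prod.ext <;> linarith
      have h3 : (e.2 - d.2) * (pt.1 - d.1) = 0 := by linear_combination -h + (pt.2 - d.2) * h1
      have hx1 : pt.1 - d.1 = 0 := by
        rcases mul_eq_zero.1 h3 with h4 | h4
        · exact absurd h4 h2
        · exact h4
      refine ⟨(pt.2 - d.2) / (e.2 - d.2), ?_⟩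
      apply Prod.ext
      · simp [h1]
        linarith
      · simp
        field_simp
        ring
    · refine ⟨(pt.1 - d.1) / (e.1 - d.1), ?_⟩
      apply Prod.ext
      · simp
        field_simp
        ring
      · simp
        field_simp
        linear_combination h

/-- The cross product `(e-d) × (x-d)` is an affine function of `x`. -/
lemma cross_affine (d e y1 y2 y3 : ℝ × ℝ) (w1 w2 w3 : ℝ) (hsum : w1 + w2 + w3 = 1) :
    (e.1 - d.1) * ((w1 • y1 + w2 • y2 + w3 • y3).2 - d.2) -
      (e.2 - d.2) * ((w1 • y1 + w2 • y2 + w3 • y3).1 - d.1) =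
    w1 * ((e.1 - d.1) * (y1.2 - d.2) - (e.2 - d.2) * (y1.1 - d.1)) +
      w2 * ((e.1 - d.1) * (y2.2 - d.2) - (e.2 - d.2) * (y2.1 - d.1)) +
      w3 * ((e.1 - d.1) * (y3.2 - d.2) - (e.2 - d.2) * (y3.1 - d.1)) := by
  have c1 : (w1 • y1 + w2 • y2 + w3 • y3).1 = w1 * y1.1 + w2 * y2.1 + w3 * y3.1 := by
    simp [smul_eq_mul]
  have c2 : (w1 • y1 + w2 • y2 + w3 • y3).2 = w1 * y1.2 + w2 * y2.2 + w3 * y3.2 := by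
    simp [smul_eq_mul]
  rw [c1, c2]
  linear_combination ((e.1 - d.1) * d.2 - (e.2 - d.2) * d.1) * hsum

set_option maxHeartbeats 1000000 in
/-- Key construction: two extreme points of `convexHull S` strictly on the same
side of the line through two other points of `S` form a 4-gon with them. -/
lemma quad_gon {S : Set (ℝ × ℝ)} {p q d e : ℝ × ℝ}
    (hpS : p ∈ S) (hqS : q ∈ S) (hdS : d ∈ S) (heS : e ∈ S)
    (hpq : p ≠ q) (hpd : p ≠ d) (hpe : p ≠ e) (hqd : q ≠ d) (hqe : q ≠ e) (hde : d ≠ e)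
    (hpext : p ∈ Set.extremePoints ℝ (convexHull ℝ S))
    (hqext : q ∈ Set.extremePoints ℝ (convexHull ℝ S))
    (hsign : 0 < ((e.1 - d.1) * (p.2 - d.2) - (e.2 - d.2) * (p.1 - d.1)) *
      ((e.1 - d.1) * (q.2 - d.2) - (e.2 - d.2) * (q.1 - d.1))) :
    IsGon 4 S {p, q, d, e} := by
  set gp : ℝ := (e.1 - d.1) * (p.2 - d.2) - (e.2 - d.2) * (p.1 - d.1) with hgp
  set gq : ℝ := (e.1 - d.1) * (q.2 - d.2) - (e.2 - d.2) * (q.1 - d.1) with hgq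
  -- d is not in the hull of {p, q, e}
  have hd_not : d ∉ convexHull ℝ ({p, q, e} : Set (ℝ × ℝ)) := by
    intro h
    obtain ⟨wp, wq, we, h0p, h0q, h0e, hsum, heq⟩ := hull3_comb hpq hpe hqe h
    have key := cross_affine d e p q e wp wq we hsum
    rw [← heq] at key
    have hz : (e.1 - d.1) * (d.2 - d.2) - (e.2 - d.2) * (d.1 - d.1) = 0 := by ring
    have hze : (e.1 - d.1) * (e.2 - d.2) - (e.2 - d.2) * (e.1 - d.1) = 0 := by ring
    rw [hz, hze] at key
    have key2 : wp * gp + wq * gq = 0 := by rw [hgp, hgq]; linarith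
    have hwp0 : wp = 0 ∧ wq = 0 := by
      rcases mul_pos_iff.1 hsign with ⟨h1, h2⟩ | ⟨h1, h2⟩
      · have e1 : wp * gp = 0 := by nlinarith
        have e2 : wq * gq = 0 := by nlinarith
        constructor
        · rcases mul_eq_zero.1 e1 with h | h
          · exact h
          · exact absurd h (ne_of_gt h1)
        · rcases mul_eq_zero.1 e2 with h | h
          · exact h
          · exact absurd h (ne_of_gt h2)
      · have e1 : wp * gp = 0 := by nlinarith
        have e2 : wq * gq = 0 := by nlinarith
        constructor
        · rcases mul_eq_zero.1 e1 with h | h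
          · exact h
          · exact absurd h (ne_of_lt h1)
        · rcases mul_eq_zero.1 e2 with h | h
          · exact h
          · exact absurd h (ne_of_lt h2)
    have hwe1 : we = 1 := by linarith [hwp0.1, hwp0.2]
    rw [hwp0.1, hwp0.2, hwe1] at heq
    simp at heq
    exact hde heq
  -- e is not in the hull of {p, q, d}
  have he_not : e ∉ convexHull ℝ ({p, q, d} : Set (ℝ × ℝ)) := by
    intro h
    obtain ⟨wp, wq, wd, h0p, h0q, h0d, hsum, heq⟩ := hull3_comb hpq hpd hqd h
    have key := cross_affine d e p q d wp wq wd hsum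
    rw [← heq] at key
    have hz : (e.1 - d.1) * (e.2 - d.2) - (e.2 - d.2) * (e.1 - d.1) = 0 := by ring
    have hzd : (e.1 - d.1) * (d.2 - d.2) - (e.2 - d.2) * (d.1 - d.1) = 0 := by ring
    rw [hz, hzd] at key
    have key2 : wp * gp + wq * gq = 0 := by rw [hgp, hgq]; linarith
    have hwp0 : wp = 0 ∧ wq = 0 := by
      rcases mul_pos_iff.1 hsign with ⟨h1, h2⟩ | ⟨h1, h2⟩
      · have e1 : wp * gp = 0 := by nlinarith
        have e2 : wq * gq = 0 := by nlinarith
        constructor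
        · rcases mul_eq_zero.1 e1 with h | h
          · exact h
          · exact absurd h (ne_of_gt h1)
        · rcases mul_eq_zero.1 e2 with h | h
          · exact h
          · exact absurd h (ne_of_gt h2)
      · have e1 : wp * gp = 0 := by nlinarith
        have e2 : wq * gq = 0 := by nlinarith
        constructor
        · rcases mul_eq_zero.1 e1 with h | h
          · exact h
          · exact absurd h (ne_of_lt h1)
        · rcases mul_eq_zero.1 e2 with h | h
          · exact h
          · exact absurd h (ne_of_lt h2)
    have hwd1 : wd = 1 := by linarith [hwp0.1, hwp0.2]
    rw [hwp0.1, hwp0.2, hwd1] at heq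
    simp at heq
    exact hde heq.symm
  -- p is not in the hull of {q, d, e}
  have hp_not : p ∉ convexHull ℝ ({q, d, e} : Set (ℝ × ℝ)) := by
    intro h
    have hsub : ({q, d, e} : Set (ℝ × ℝ)) ⊆ S \ {p} := by
      intro z hz
      rcases hz with rfl | rfl | rfl
      · exact ⟨hqS, by simp [hpq.symm]⟩
      · exact ⟨hdS, by simp [hpd.symm]⟩
      · exact ⟨heS, by simp [hpe.symm]⟩
    exact extremePoint_not_mem_diff hpext (convexHull_mono hsub h)
  -- q is not in the hull of {p, d, e}
  have hq_not : q ∉ convexHull ℝ ({p, d, e} : Set (ℝ × ℝ)) := by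
    intro h
    have hsub : ({p, d, e} : Set (ℝ × ℝ)) ⊆ S \ {q} := by
      intro z hz
      rcases hz with rfl | rfl | rfl
      · exact ⟨hpS, by simp [hpq]⟩
      · exact ⟨hdS, by simp [hqd.symm]⟩
      · exact ⟨heS, by simp [hqe.symm]⟩
    exact extremePoint_not_mem_diff hqext (convexHull_mono hsub h)
  refine ⟨?_, Set.toFinite _, ?_, ?_⟩
  · intro z hz
    rcases hz with rfl | rfl | rfl | rfl
    exacts [hpS, hqS, hdS, heS]
  · rw [Set.ncard_insert_of_notMem (by simp [hpq, hpd, hpe]),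
      Set.ncard_insert_of_notMem (by simp [hqd, hqe]),
      Set.ncard_insert_of_notMem (by simp [hde]), Set.ncard_singleton]
  · intro z hz
    rcases hz with rfl | rfl | rfl | rfl
    · exact extremePoint_insert ⟨q, by simp⟩ hp_not
    · have hset : ({p, z, d, e} : Set (ℝ × ℝ)) = insert z {p, d, e} := by
        ext w; simp; tauto
      rw [hset]
      exact extremePoint_insert ⟨p, by simp⟩ hq_not
    · have hset : ({p, q, z, e} : Set (ℝ × ℝ)) = insert z {p, q, e} := by
        ext w; simp; tauto
      rw [hset]
      exact extremePoint_insert ⟨p, by simp⟩ hd_not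
    · have hset : ({p, q, d, z} : Set (ℝ × ℝ)) = insert z {p, q, d} := by
        ext w; simp; tauto
      rw [hset]
      exact extremePoint_insert ⟨p, by simp⟩ he_not

set_option maxHeartbeats 1000000 in
/-- Esther Klein's theorem: every set of 5 points in the plane in general
position contains a 4-gon, i.e. four points in convex position. -/
theorem every_5_point_set_has_4gon (S : Set (ℝ × ℝ))
    (hfin : S.Finite) (hcard : S.ncard = 5) (hgp : InGenPos S) :
    ∃ P : Set (ℝ × ℝ), IsGon 4 S P := by
  classical
  set E : Set (ℝ × ℝ) := Set.extremePoints ℝ (convexHull ℝ S) with hEdef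
  have hES : E ⊆ S := extremePoints_convexHull_subset
  have hEfin : E.Finite := hfin.subset hES
  -- Krein-Milman for finite sets
  have hKM : convexHull ℝ E = convexHull ℝ S := by
    have h1 := closure_convexHull_extremePoints (hfin.isCompact_convexHull ℝ)
      (convex_convexHull ℝ S)
    rwa [(hEfin.isClosed_convexHull ℝ).closure_eq] at h1
  -- at least three extreme points
  have hE3 : 3 ≤ E.ncard := by
    by_contra hc
    push_neg at hc
    have hc2 : E.ncard ≤ 2 := by omega
    -- E is contained in a two-point set
    have hSne : S.Nonempty := Set.nonempty_of_ncard_ne_zero (by omega)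
    obtain ⟨x, y, hExy⟩ : ∃ x y : ℝ × ℝ, E ⊆ {x, y} := by
      rcases Set.eq_empty_or_nonempty E with hE | ⟨x, hx⟩
      · exact ⟨0, 0, by rw [hE]; exact Set.empty_subset _⟩
      · by_cases hsub : E ⊆ {x}
        · exact ⟨x, x, by intro z hz; simp [hsub hz]⟩
        · obtain ⟨y, hyE, hyx⟩ := Set.not_subset.1 hsub
          refine ⟨x, y, ?_⟩
          intro z hz
          by_contra hzxy
          simp only [Set.mem_insert_iff, Set.mem_singleton_iff, not_or] at hzxy
          have h3 : ({x, y, z} : Set (ℝ × ℝ)) ⊆ E := by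
            intro w hw
            rcases hw with rfl | rfl | rfl
            exacts [hx, hyE, hz]
          have hc3 : ({x, y, z} : Set (ℝ × ℝ)).ncard = 3 := by
            rw [Set.ncard_insert_of_notMem (by
                simp only [Set.mem_insert_iff, Set.mem_singleton_iff, not_or]
                exact ⟨fun h => hyx h.symm, fun h => hzxy.1 h.symm⟩),
              Set.ncard_insert_of_notMem (by
                simp only [Set.mem_singleton_iff]
                exact fun h => hzxy.2 h.symm), Set.ncard_singleton]
          have := Set.ncard_le_ncard h3 hEfin
          omega
    -- all of S lies on the line through x and y
    have hSline : ∀ z ∈ S, z ∈ line[ℝ, x, y] := by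
      intro z hz
      have hz1 : z ∈ convexHull ℝ E := by
        rw [hKM]; exact subset_convexHull ℝ S hz
      have hz2 : z ∈ affineSpan ℝ E := convexHull_subset_affineSpan E hz1
      exact affineSpan_mono ℝ hExy hz2
    -- pick three distinct points of S, contradiction with general position
    obtain ⟨T, hTS, hT3⟩ := Set.exists_subset_card_eq (show 3 ≤ S.ncard by omega)
    obtain ⟨u, v, w, huv, huw, hvw, rfl⟩ := Set.ncard_eq_three.1 hT3
    apply hgp u (hTS (by simp)) v (hTS (by simp)) w (hTS (by simp)) huv huw hvw
    have hcol : Collinear ℝ ({u, v, w, x, y} : Set (ℝ × ℝ)) :=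
      collinear_insert_insert_insert_of_mem_affineSpan_pair
        (hSline u (hTS (by simp))) (hSline v (hTS (by simp)))
        (hSline w (hTS (by simp)))
    exact hcol.subset (by intro z hz; simp at hz ⊢; tauto)
  rcases le_or_gt 4 E.ncard with h4 | h4
  · -- at least four extreme points: they form a 4-gon
    obtain ⟨P, hPE, hP4⟩ := Set.exists_subset_card_eq h4
    refine ⟨P, hPE.trans hES, hfin.subset (hPE.trans hES), hP4, ?_⟩
    intro z hz
    have hhull : convexHull ℝ P ⊆ convexHull ℝ S := convexHull_mono (hPE.trans hES)
    exact inter_extremePoints_subset_extremePoints_of_subset hhull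
      ⟨subset_convexHull ℝ P hz, hPE hz⟩
  · -- exactly three extreme points
    obtain ⟨a, b, c, hab, hac, hbc, hE⟩ := Set.ncard_eq_three.1 (by omega : E.ncard = 3)
    have hdiff2 : (S \ E).ncard = 2 := by
      rw [Set.ncard_diff hES hEfin]
      omega
    obtain ⟨d, e, hde, hSE⟩ := Set.ncard_eq_two.1 hdiff2
    have hdSE : d ∈ S \ E := by rw [hSE]; simp
    have heSE : e ∈ S \ E := by rw [hSE]; simp
    have hdS : d ∈ S := hdSE.1
    have heS : e ∈ S := heSE.1
    have hdE : d ∉ E := hdSE.2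
    have heE : e ∉ E := heSE.2
    have haE : a ∈ E := by rw [hE]; simp
    have hbE : b ∈ E := by rw [hE]; simp
    have hcE : c ∈ E := by rw [hE]; simp
    set gv : (ℝ × ℝ) → ℝ :=
      fun z => (e.1 - d.1) * (z.2 - d.2) - (e.2 - d.2) * (z.1 - d.1) with hgv
    have hgnz : ∀ z ∈ E, gv z ≠ 0 := by
      intro z hz h0
      have hdz : d ≠ z := fun h => hdE (h ▸ hz)
      have hez : e ≠ z := fun h => heE (h ▸ hz)
      exact hgp d hdS e heS z (hES hz) hde hdz hez (collinear_of_cross_zero hde h0)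
    -- two of the three extreme points are strictly on the same side of line de
    obtain ⟨p, q, hpE, hqE, hpq, hsign⟩ :
        ∃ p q, p ∈ E ∧ q ∈ E ∧ p ≠ q ∧ 0 < gv p * gv q := by
      by_cases h1 : 0 < gv a * gv b
      · exact ⟨a, b, haE, hbE, hab, h1⟩
      · by_cases h2 : 0 < gv a * gv c
        · exact ⟨a, c, haE, hcE, hac, h2⟩
        · refine ⟨b, c, hbE, hcE, hbc, ?_⟩
          have hna : gv a ≠ 0 := hgnz a haE
          have hnb : gv b ≠ 0 := hgnz b hbE
          have hnc : gv c ≠ 0 := hgnz c hcE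
          have h1' : gv a * gv b < 0 :=
            lt_of_le_of_ne (not_lt.1 h1) (mul_ne_zero hna hnb)
          have h2' : gv a * gv c < 0 :=
            lt_of_le_of_ne (not_lt.1 h2) (mul_ne_zero hna hnc)
          nlinarith [mul_pos_of_neg_of_neg h1' h2', sq_nonneg (gv a)]
    have hpd : p ≠ d := fun h => hdE (h ▸ hpE)
    have hpe : p ≠ e := fun h => heE (h ▸ hpE)
    have hqd : q ≠ d := fun h => hdE (h ▸ hqE)
    have hqe : q ≠ e := fun h => heE (h ▸ hqE)
    exact ⟨{p, q, d, e}, quad_gon (hES hpE) (hES hqE) hdS heS hpq hpd hpe hqd hqe hde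
      hpE hqE hsign⟩
end

section
/- Let S be a finite set of points in ℝ² in general position and let a, b, c ∈ S be three distinct points. If some point of S lies in the interior of the triangle with vertices a, b, c, then there exists a point i ∈ S lying in the interior of the triangle with vertices a, b, c such that no point of S lies in the interior of the triangle with vertices a, i, c. (Take for i the interior point of S nearest to the line through a and c.) -/
lemma det3_expand (p q r : ℝ × ℝ) :
    det3 p q r = q.1*r.2 - r.1*q.2 - p.1*r.2 + r.1*p.2 + p.1*q.2 - q.1*p.2 := by
  simp [det3, Matrix.det_fin_three]

lemma key (a c : ℝ × ℝ) (hac : a ≠ c) (x p : ℝ × ℝ)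
    (hp : p ∈ interior (convexHull ℝ ({a, x, c} : Set (ℝ × ℝ)))) :
    |det3 a p c| < |det3 a x c| := by
  set α : ℝ := c.2 - a.2 with hα
  set β : ℝ := a.1 - c.1 with hβ
  set k : ℝ := c.1 * a.2 - a.1 * c.2 with hk
  have hlin : IsLinearMap ℝ (fun y : ℝ × ℝ => y.1 * α + y.2 * β) := by
    constructor
    · intro u v; simp [Prod.fst_add, Prod.snd_add]; ring
    · intro t v; simp [Prod.smul_fst, Prod.smul_snd, smul_eq_mul]; ring
  have hf : ∀ y : ℝ × ℝ, det3 a y c = y.1 * α + y.2 * β + k := by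
    intro y; rw [det3_expand, hα, hβ, hk]; ring
  set D := det3 a x c with hD
  have hva : a.1 * α + a.2 * β + k = 0 := by rw [hα, hβ, hk]; ring
  have hvc : c.1 * α + c.2 * β + k = 0 := by rw [hα, hβ, hk]; ring
  have hvx : x.1 * α + x.2 * β + k = D := (hf x).symm
  have hsub1 : convexHull ℝ ({a, x, c} : Set (ℝ × ℝ)) ⊆
      {y : ℝ × ℝ | y.1 * α + y.2 * β ≤ max 0 D - k} := by
    apply convexHull_min _ (convex_halfSpace_le hlin _)
    intro y hy
    simp only [Set.mem_insert_iff, Set.mem_singleton_iff] at hy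
    have h0 : (0:ℝ) ≤ max 0 D := le_max_left _ _
    have hDm : D ≤ max 0 D := le_max_right _ _
    rcases hy with h | h | h <;> subst h <;> simp only [Set.mem_setOf_eq] <;> linarith
  have hsub2 : convexHull ℝ ({a, x, c} : Set (ℝ × ℝ)) ⊆
      {y : ℝ × ℝ | min 0 D - k ≤ y.1 * α + y.2 * β} := by
    apply convexHull_min _ (convex_halfSpace_ge hlin _)
    intro y hy
    simp only [Set.mem_insert_iff, Set.mem_singleton_iff] at hy
    have h0 : min 0 D ≤ (0:ℝ) := min_le_left _ _
    have hDm : min 0 D ≤ D := min_le_right _ _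
    rcases hy with h | h | h <;> subst h <;> simp only [Set.mem_setOf_eq] <;> linarith
  -- a small ball around p inside the hull
  obtain ⟨ε, hε, hball⟩ := Metric.isOpen_iff.1 isOpen_interior p hp
  have hball' : Metric.ball p ε ⊆ convexHull ℝ ({a, x, c} : Set (ℝ × ℝ)) :=
    hball.trans interior_subset
  have hac' : a.1 ≠ c.1 ∨ a.2 ≠ c.2 := by
    by_contra hcon; push_neg at hcon; exact hac (Prod.ext hcon.1 hcon.2)
  have hLv : 0 < α * α + β * β := by
    rcases hac' with h | h
    · have hβ0 : β ≠ 0 := by rw [hβ]; intro hh; apply h; linarith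
      nlinarith [mul_self_pos.2 hβ0, mul_self_nonneg α]
    · have hα0 : α ≠ 0 := by rw [hα]; intro hh; apply h; linarith
      nlinarith [mul_self_pos.2 hα0, mul_self_nonneg β]
  set v : ℝ × ℝ := (α, β) with hv
  have hvne : v ≠ 0 := by
    intro h
    have h1 : α = 0 := by
      have := congrArg Prod.fst h; simpa [hv] using this
    have h2 : β = 0 := by
      have := congrArg Prod.snd h; simpa [hv] using this
    rw [h1, h2] at hLv; simp at hLv
  have hvn : 0 < ‖v‖ := norm_pos_iff.2 hvne
  set t : ℝ := ε / (2 * ‖v‖) with ht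
  have htpos : 0 < t := by positivity
  have hmem : ∀ s : ℝ, |s| = t → p + s • v ∈ convexHull ℝ ({a, x, c} : Set (ℝ × ℝ)) := by
    intro s hs
    apply hball'
    rw [Metric.mem_ball, dist_eq_norm, add_sub_cancel_left, norm_smul,
      Real.norm_eq_abs, hs, ht, div_mul_eq_mul_div, div_lt_iff₀ (by positivity)]
    nlinarith [hvn, hε]
  have h1 := hsub1 (hmem t (abs_of_pos htpos))
  have h2 := hsub2 (hmem (-t) (by rw [abs_neg, abs_of_pos htpos]))
  simp only [Set.mem_setOf_eq, Prod.fst_add, Prod.snd_add, Prod.smul_fst, Prod.smul_snd,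
    smul_eq_mul, hv] at h1 h2
  have hfp : det3 a p c = p.1 * α + p.2 * β + k := hf p
  have hpr : 0 < t * (α * α + β * β) := mul_pos htpos hLv
  have hub : det3 a p c < max 0 D := by nlinarith
  have hlb : min 0 D < det3 a p c := by nlinarith
  rw [abs_lt]
  constructor
  · have : -|D| ≤ min 0 D := le_min (neg_nonpos.2 (abs_nonneg D)) (neg_abs_le D)
    linarith
  · have : max 0 D ≤ |D| := max_le (abs_nonneg D) (le_abs_self D)
    linarith

/-- If some point of `S` lies inside the triangle `a b c`, then there is a
point `i` of `S` inside this triangle such that the triangle `a i c` contains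
no point of `S` in its interior. -/
theorem exists_interior_point_with_empty_subtriangle (S : Set (ℝ × ℝ))
    (hfin : S.Finite) (hgp : InGenPos S)
    (a b c : ℝ × ℝ) (ha : a ∈ S) (hb : b ∈ S) (hc : c ∈ S)
    (hab : a ≠ b) (hac : a ≠ c) (hbc : b ≠ c)
    (hne : ∃ p ∈ S, p ∈ interior (convexHull ℝ ({a, b, c} : Set (ℝ × ℝ)))) :
    ∃ i ∈ S, i ∈ interior (convexHull ℝ ({a, b, c} : Set (ℝ × ℝ))) ∧
      ∀ p ∈ S, p ∉ interior (convexHull ℝ ({a, i, c} : Set (ℝ × ℝ))) := by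
  classical
  obtain ⟨p0, hp0S, hp0⟩ := hne
  set T : Set (ℝ × ℝ) :=
    {p | p ∈ S ∧ p ∈ interior (convexHull ℝ ({a, b, c} : Set (ℝ × ℝ)))} with hT
  have hTfin : T.Finite := hfin.subset (fun x hx => hx.1)
  have hTne : T.Nonempty := ⟨p0, hp0S, hp0⟩
  obtain ⟨i, hiT, hmin⟩ := Set.exists_min_image T (fun p => |det3 a p c|) hTfin hTne
  refine ⟨i, hiT.1, hiT.2, ?_⟩
  intro p hpS hpint
  have hsub : convexHull ℝ ({a, i, c} : Set (ℝ × ℝ)) ⊆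
      convexHull ℝ ({a, b, c} : Set (ℝ × ℝ)) := by
    apply convexHull_min _ (convex_convexHull ℝ _)
    intro y hy
    simp only [Set.mem_insert_iff, Set.mem_singleton_iff] at hy
    rcases hy with h | h | h
    · exact h ▸ subset_convexHull ℝ _ (by simp)
    · exact h ▸ interior_subset hiT.2
    · exact h ▸ subset_convexHull ℝ _ (by simp)
  have hp' : p ∈ interior (convexHull ℝ ({a, b, c} : Set (ℝ × ℝ))) :=
    interior_mono hsub hpint
  have h1 := key a c hac i p hpint
  have h2 := hmin p ⟨hpS, hp'⟩
  linarith
end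

section
/- Let S = {p₁, …, pₙ} ⊆ ℝ² be a set of n points in general position whose x-coordinates are strictly increasing in the index, and such that p₂, …, pₙ appear in counterclockwise order around p₁, i.e., for all 2 ≤ a < b ≤ n the triple (p₁, p_a, p_b) is positively oriented. If for some index a with 2 ≤ a ≤ n−4 the three consecutive triples (p_a, p_{a+1}, p_{a+2}), (p_{a+1}, p_{a+2}, p_{a+3}) and (p_{a+2}, p_{a+3}, p_{a+4}) are all positively oriented, then the six points {p₁, p_a, p_{a+1}, p_{a+2}, p_{a+3}, p_{a+4}} form a 6-hole of S. -/
lemma det3_eq_s16 (u v w : ℝ × ℝ) :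
    det3 u v w = (v.1 - u.1) * (w.2 - u.2) - (w.1 - u.1) * (v.2 - u.2) := by
  simp [det3, Matrix.det_fin_three]; ring

lemma det3_rot (u v w : ℝ × ℝ) : det3 u v w = det3 v w u := by
  simp only [det3_eq_s16]; ring

lemma det3_swap (u v w : ℝ × ℝ) : det3 u v w = -det3 u w v := by
  simp only [det3_eq_s16]; ring

lemma det3_self13 (u v : ℝ × ℝ) : det3 u v u = 0 := by simp only [det3_eq_s16]; ring

lemma det3_self23 (u v : ℝ × ℝ) : det3 u v v = 0 := by simp only [det3_eq_s16]; ring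

lemma det3_affine (u w : ℝ × ℝ) (t s : ℝ) (x y : ℝ × ℝ) (h : t + s = 1) :
    det3 u w (t • x + s • y) = t * det3 u w x + s * det3 u w y := by
  have hs : s = 1 - t := by linarith
  subst hs
  simp only [det3_eq_s16, Prod.fst_add, Prod.snd_add, Prod.smul_fst, Prod.smul_snd, smul_eq_mul]
  ring

lemma step4 (q0 q1 q2 q3 : ℝ × ℝ) (h01 : q0.1 < q1.1) (h12 : q1.1 < q2.1) (h23 : q2.1 < q3.1)
    (hA : 0 < det3 q0 q1 q2) (hB : 0 < det3 q1 q2 q3) :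
    0 < det3 q0 q1 q3 ∧ 0 < det3 q0 q2 q3 := by
  have k1 : det3 q0 q1 q3 * (q2.1 - q1.1)
      = det3 q0 q1 q2 * (q3.1 - q1.1) + det3 q1 q2 q3 * (q1.1 - q0.1) := by
    simp only [det3_eq_s16]; ring
  have k2 : det3 q0 q2 q3 * (q2.1 - q1.1)
      = det3 q0 q1 q2 * (q3.1 - q2.1) + det3 q1 q2 q3 * (q2.1 - q0.1) := by
    simp only [det3_eq_s16]; ring
  constructor
  · nlinarith [mul_pos hA (show (0:ℝ) < q3.1 - q1.1 by linarith),
      mul_pos hB (show (0:ℝ) < q1.1 - q0.1 by linarith)]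
  · nlinarith [mul_pos hA (show (0:ℝ) < q3.1 - q2.1 by linarith),
      mul_pos hB (show (0:ℝ) < q2.1 - q0.1 by linarith)]

lemma hull_nonneg (f : ℝ × ℝ → ℝ)
    (haff : ∀ (t s : ℝ) (x y : ℝ × ℝ), t + s = 1 → f (t • x + s • y) = t * f x + s * f y)
    (P : Set (ℝ × ℝ)) (hP : ∀ q ∈ P, 0 ≤ f q) :
    ∀ z ∈ convexHull ℝ P, 0 ≤ f z := by
  intro z hz
  have hsub : convexHull ℝ P ⊆ {x | 0 ≤ f x} := by
    apply convexHull_min hP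
    intro x hx y hy t s ht hs hts
    have hx' : 0 ≤ f x := hx
    have hy' : 0 ≤ f y := hy
    show 0 ≤ f (t • x + s • y)
    rw [haff t s x y hts]
    exact add_nonneg (mul_nonneg ht hx') (mul_nonneg hs hy')
  exact hsub hz

lemma hull_pos (f : ℝ × ℝ → ℝ)
    (haff : ∀ (t s : ℝ) (x y : ℝ × ℝ), t + s = 1 → f (t • x + s • y) = t * f x + s * f y)
    (P : Set (ℝ × ℝ)) (hP : ∀ q ∈ P, 0 < f q) :
    ∀ z ∈ convexHull ℝ P, 0 < f z := by
  intro z hz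
  have hsub : convexHull ℝ P ⊆ {x | 0 < f x} := by
    apply convexHull_min hP
    intro x hx y hy t s ht hs hts
    have hx' : 0 < f x := hx
    have hy' : 0 < f y := hy
    show 0 < f (t • x + s • y)
    rw [haff t s x y hts]
    rcases eq_or_lt_of_le ht with h | h
    · rw [← h]; simpa using mul_pos (by linarith : (0:ℝ) < s) hy'
    · rcases eq_or_lt_of_le hs with h' | h'
      · rw [← h']; simpa using mul_pos h hx'
      · exact add_pos (mul_pos h hx') (mul_pos h' hy')
  exact hsub hz

lemma extreme_of_support (v : ℝ × ℝ) (Q : Set (ℝ × ℝ)) (hQne : Q.Nonempty)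
    (f : ℝ × ℝ → ℝ)
    (haff : ∀ (t s : ℝ) (x y : ℝ × ℝ), t + s = 1 → f (t • x + s • y) = t * f x + s * f y)
    (hv : f v = 0) (hQ : ∀ q ∈ Q, 0 < f q) :
    v ∈ Set.extremePoints ℝ (convexHull ℝ (insert v Q)) := by
  have hge : ∀ z ∈ convexHull ℝ (insert v Q), 0 ≤ f z := by
    apply hull_nonneg f haff
    rintro q (rfl | hq)
    · exact le_of_eq hv.symm
    · exact (hQ q hq).le
  have key : ∀ z ∈ convexHull ℝ (insert v Q), f z = 0 → z = v := by
    intro z hz hz0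
    rw [convexHull_insert hQne, mem_convexJoin] at hz
    obtain ⟨c, hc, b, hb, hzseg⟩ := hz
    rw [Set.mem_singleton_iff] at hc
    obtain ⟨t, s, ht, hs, hts, hzz⟩ := hzseg
    rw [hc] at hzz
    have hfb : 0 < f b := hull_pos f haff Q hQ b hb
    have : f z = t * f v + s * f b := by rw [← hzz]; exact haff t s v b hts
    have hs0 : s = 0 := by
      rcases eq_or_lt_of_le hs with h | h
      · exact h.symm
      · nlinarith
    have ht1 : t = 1 := by linarith
    rw [← hzz, hs0, ht1, one_smul, zero_smul, add_zero]
  rw [mem_extremePoints]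
  refine ⟨subset_convexHull ℝ _ (Set.mem_insert _ _), ?_⟩
  intro x hx y hy hseg
  obtain ⟨t, s, ht, hs, hts, hxy⟩ := hseg
  have hfx := hge x hx
  have hfy := hge y hy
  have hfv : t * f x + s * f y = 0 := by rw [← haff t s x y hts, hxy, hv]
  have hfx0 : f x = 0 := by nlinarith
  have hfy0 : f y = 0 := by nlinarith
  exact ⟨key x hx hfx0, key y hy hfy0⟩

lemma hexagon_extreme (w1 w2 w3 w4 w5 w6 : ℝ × ℝ)
    (T123 : 0 < det3 w1 w2 w3) (T124 : 0 < det3 w1 w2 w4) (T125 : 0 < det3 w1 w2 w5) (T126 : 0 < det3 w1 w2 w6) (T134 : 0 < det3 w1 w3 w4) (T135 : 0 < det3 w1 w3 w5) (T136 : 0 < det3 w1 w3 w6) (T145 : 0 < det3 w1 w4 w5) (T146 : 0 < det3 w1 w4 w6) (T156 : 0 < det3 w1 w5 w6) (T234 : 0 < det3 w2 w3 w4) (T235 : 0 < det3 w2 w3 w5) (T236 : 0 < det3 w2 w3 w6) (T245 : 0 < det3 w2 w4 w5) (T246 : 0 < det3 w2 w4 w6) (T256 : 0 < det3 w2 w5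 w6) (T345 : 0 < det3 w3 w4 w5) (T346 : 0 < det3 w3 w4 w6) (T356 : 0 < det3 w3 w5 w6) (T456 : 0 < det3 w4 w5 w6) :
    ∀ q ∈ ({w1, w2, w3, w4, w5, w6} : Set (ℝ × ℝ)),
      q ∈ Set.extremePoints ℝ (convexHull ℝ ({w1, w2, w3, w4, w5, w6} : Set (ℝ × ℝ))) := by
  intro x hxm
  simp only [Set.mem_insert_iff, Set.mem_singleton_iff] at hxm
  rcases hxm with h | h | h | h | h | h <;> rw [h]
  · refine extreme_of_support w1 {w2, w3, w4, w5, w6} ⟨w2, Set.mem_insert _ _⟩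
      (fun x => det3 w6 w1 x + det3 w1 w2 x)
      (fun t s x y h => by
        show det3 w6 w1 (t • x + s • y) + det3 w1 w2 (t • x + s • y)
          = t * (det3 w6 w1 x + det3 w1 w2 x) + s * (det3 w6 w1 y + det3 w1 w2 y)
        rw [det3_affine w6 w1 t s x y h, det3_affine w1 w2 t s x y h]; ring)
      (by simp [det3_self23, det3_self13]) ?_
    intro q hq
    simp only [Set.mem_insert_iff, Set.mem_singleton_iff] at hq
    rcases hq with h' | h' | h' | h' | h' <;> rw [h']
    · show (0:ℝ) < det3 w6 w1 w2 + det3 w1 w2 w2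
      linarith [det3_rot w6 w1 w2, T126, det3_self23 w1 w2]
    · show (0:ℝ) < det3 w6 w1 w3 + det3 w1 w2 w3
      linarith [det3_rot w6 w1 w3, T136, T123]
    · show (0:ℝ) < det3 w6 w1 w4 + det3 w1 w2 w4
      linarith [det3_rot w6 w1 w4, T146, T124]
    · show (0:ℝ) < det3 w6 w1 w5 + det3 w1 w2 w5
      linarith [det3_rot w6 w1 w5, T156, T125]
    · show (0:ℝ) < det3 w6 w1 w6 + det3 w1 w2 w6
      linarith [det3_self13 w6 w1, T126]
  · have hPeq : ({w1, w2, w3, w4, w5, w6} : Set (ℝ × ℝ)) = insert w2 ({w1, w3, w4, w5, w6} : Set (ℝ × ℝ)) := by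
      ext z; simp only [Set.mem_insert_iff, Set.mem_singleton_iff]; tauto
    rw [hPeq]
    refine extreme_of_support w2 {w1, w3, w4, w5, w6} ⟨w1, Set.mem_insert _ _⟩
      (fun x => det3 w1 w2 x + det3 w2 w3 x)
      (fun t s x y h => by
        show det3 w1 w2 (t • x + s • y) + det3 w2 w3 (t • x + s • y)
          = t * (det3 w1 w2 x + det3 w2 w3 x) + s * (det3 w1 w2 y + det3 w2 w3 y)
        rw [det3_affine w1 w2 t s x y h, det3_affine w2 w3 t s x y h]; ring)
      (by simp [det3_self23, det3_self13]) ?_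
    intro q hq
    simp only [Set.mem_insert_iff, Set.mem_singleton_iff] at hq
    rcases hq with h' | h' | h' | h' | h' <;> rw [h']
    · show (0:ℝ) < det3 w1 w2 w1 + det3 w2 w3 w1
      linarith [det3_self13 w1 w2, det3_rot w2 w3 w1, det3_rot w3 w1 w2, T123]
    · show (0:ℝ) < det3 w1 w2 w3 + det3 w2 w3 w3
      linarith [T123, det3_self23 w2 w3]
    · show (0:ℝ) < det3 w1 w2 w4 + det3 w2 w3 w4
      linarith [T124, T234]
    · show (0:ℝ) < det3 w1 w2 w5 + det3 w2 w3 w5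
      linarith [T125, T235]
    · show (0:ℝ) < det3 w1 w2 w6 + det3 w2 w3 w6
      linarith [T126, T236]
  · have hPeq : ({w1, w2, w3, w4, w5, w6} : Set (ℝ × ℝ)) = insert w3 ({w1, w2, w4, w5, w6} : Set (ℝ × ℝ)) := by
      ext z; simp only [Set.mem_insert_iff, Set.mem_singleton_iff]; tauto
    rw [hPeq]
    refine extreme_of_support w3 {w1, w2, w4, w5, w6} ⟨w1, Set.mem_insert _ _⟩
      (fun x => det3 w2 w3 x + det3 w3 w4 x)
      (fun t s x y h => by
        show det3 w2 w3 (t • x + s • y) + det3 w3 w4 (t • x + s • y)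
          = t * (det3 w2 w3 x + det3 w3 w4 x) + s * (det3 w2 w3 y + det3 w3 w4 y)
        rw [det3_affine w2 w3 t s x y h, det3_affine w3 w4 t s x y h]; ring)
      (by simp [det3_self23, det3_self13]) ?_
    intro q hq
    simp only [Set.mem_insert_iff, Set.mem_singleton_iff] at hq
    rcases hq with h' | h' | h' | h' | h' <;> rw [h']
    · show (0:ℝ) < det3 w2 w3 w1 + det3 w3 w4 w1
      linarith [det3_rot w2 w3 w1, det3_rot w3 w1 w2, T123, det3_rot w3 w4 w1, det3_rot w4 w1 w3, T134]
    · show (0:ℝ) < det3 w2 w3 w2 + det3 w3 w4 w2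
      linarith [det3_self13 w2 w3, det3_rot w3 w4 w2, det3_rot w4 w2 w3, T234]
    · show (0:ℝ) < det3 w2 w3 w4 + det3 w3 w4 w4
      linarith [T234, det3_self23 w3 w4]
    · show (0:ℝ) < det3 w2 w3 w5 + det3 w3 w4 w5
      linarith [T235, T345]
    · show (0:ℝ) < det3 w2 w3 w6 + det3 w3 w4 w6
      linarith [T236, T346]
  · have hPeq : ({w1, w2, w3, w4, w5, w6} : Set (ℝ × ℝ)) = insert w4 ({w1, w2, w3, w5, w6} : Set (ℝ × ℝ)) := by
      ext z; simp only [Set.mem_insert_iff, Set.mem_singleton_iff]; tauto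
    rw [hPeq]
    refine extreme_of_support w4 {w1, w2, w3, w5, w6} ⟨w1, Set.mem_insert _ _⟩
      (fun x => det3 w3 w4 x + det3 w4 w5 x)
      (fun t s x y h => by
        show det3 w3 w4 (t • x + s • y) + det3 w4 w5 (t • x + s • y)
          = t * (det3 w3 w4 x + det3 w4 w5 x) + s * (det3 w3 w4 y + det3 w4 w5 y)
        rw [det3_affine w3 w4 t s x y h, det3_affine w4 w5 t s x y h]; ring)
      (by simp [det3_self23, det3_self13]) ?_
    intro q hq
    simp only [Set.mem_insert_iff, Set.mem_singleton_iff] at hq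
    rcases hq with h' | h' | h' | h' | h' <;> rw [h']
    · show (0:ℝ) < det3 w3 w4 w1 + det3 w4 w5 w1
      linarith [det3_rot w3 w4 w1, det3_rot w4 w1 w3, T134, det3_rot w4 w5 w1, det3_rot w5 w1 w4, T145]
    · show (0:ℝ) < det3 w3 w4 w2 + det3 w4 w5 w2
      linarith [det3_rot w3 w4 w2, det3_rot w4 w2 w3, T234, det3_rot w4 w5 w2, det3_rot w5 w2 w4, T245]
    · show (0:ℝ) < det3 w3 w4 w3 + det3 w4 w5 w3
      linarith [det3_self13 w3 w4, det3_rot w4 w5 w3, det3_rot w5 w3 w4, T345]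
    · show (0:ℝ) < det3 w3 w4 w5 + det3 w4 w5 w5
      linarith [T345, det3_self23 w4 w5]
    · show (0:ℝ) < det3 w3 w4 w6 + det3 w4 w5 w6
      linarith [T346, T456]
  · have hPeq : ({w1, w2, w3, w4, w5, w6} : Set (ℝ × ℝ)) = insert w5 ({w1, w2, w3, w4, w6} : Set (ℝ × ℝ)) := by
      ext z; simp only [Set.mem_insert_iff, Set.mem_singleton_iff]; tauto
    rw [hPeq]
    refine extreme_of_support w5 {w1, w2, w3, w4, w6} ⟨w1, Set.mem_insert _ _⟩
      (fun x => det3 w4 w5 x + det3 w5 w6 x)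
      (fun t s x y h => by
        show det3 w4 w5 (t • x + s • y) + det3 w5 w6 (t • x + s • y)
          = t * (det3 w4 w5 x + det3 w5 w6 x) + s * (det3 w4 w5 y + det3 w5 w6 y)
        rw [det3_affine w4 w5 t s x y h, det3_affine w5 w6 t s x y h]; ring)
      (by simp [det3_self23, det3_self13]) ?_
    intro q hq
    simp only [Set.mem_insert_iff, Set.mem_singleton_iff] at hq
    rcases hq with h' | h' | h' | h' | h' <;> rw [h']
    · show (0:ℝ) < det3 w4 w5 w1 + det3 w5 w6 w1
      linarith [det3_rot w4 w5 w1, det3_rot w5 w1 w4, T145, det3_rot w5 w6 w1, det3_rot w6 w1 w5, T156]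
    · show (0:ℝ) < det3 w4 w5 w2 + det3 w5 w6 w2
      linarith [det3_rot w4 w5 w2, det3_rot w5 w2 w4, T245, det3_rot w5 w6 w2, det3_rot w6 w2 w5, T256]
    · show (0:ℝ) < det3 w4 w5 w3 + det3 w5 w6 w3
      linarith [det3_rot w4 w5 w3, det3_rot w5 w3 w4, T345, det3_rot w5 w6 w3, det3_rot w6 w3 w5, T356]
    · show (0:ℝ) < det3 w4 w5 w4 + det3 w5 w6 w4
      linarith [det3_self13 w4 w5, det3_rot w5 w6 w4, det3_rot w6 w4 w5, T456]
    · show (0:ℝ) < det3 w4 w5 w6 + det3 w5 w6 w6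
      linarith [T456, det3_self23 w5 w6]
  · have hPeq : ({w1, w2, w3, w4, w5, w6} : Set (ℝ × ℝ)) = insert w6 ({w1, w2, w3, w4, w5} : Set (ℝ × ℝ)) := by
      ext z; simp only [Set.mem_insert_iff, Set.mem_singleton_iff]; tauto
    rw [hPeq]
    refine extreme_of_support w6 {w1, w2, w3, w4, w5} ⟨w1, Set.mem_insert _ _⟩
      (fun x => det3 w5 w6 x + det3 w6 w1 x)
      (fun t s x y h => by
        show det3 w5 w6 (t • x + s • y) + det3 w6 w1 (t • x + s • y)
          = t * (det3 w5 w6 x + det3 w6 w1 x) + s * (det3 w5 w6 y + det3 w6 w1 y)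
        rw [det3_affine w5 w6 t s x y h, det3_affine w6 w1 t s x y h]; ring)
      (by simp [det3_self23, det3_self13]) ?_
    intro q hq
    simp only [Set.mem_insert_iff, Set.mem_singleton_iff] at hq
    rcases hq with h' | h' | h' | h' | h' <;> rw [h']
    · show (0:ℝ) < det3 w5 w6 w1 + det3 w6 w1 w1
      linarith [det3_rot w5 w6 w1, det3_rot w6 w1 w5, T156, det3_self23 w6 w1]
    · show (0:ℝ) < det3 w5 w6 w2 + det3 w6 w1 w2
      linarith [det3_rot w5 w6 w2, det3_rot w6 w2 w5, T256, det3_rot w6 w1 w2, T126]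
    · show (0:ℝ) < det3 w5 w6 w3 + det3 w6 w1 w3
      linarith [det3_rot w5 w6 w3, det3_rot w6 w3 w5, T356, det3_rot w6 w1 w3, T136]
    · show (0:ℝ) < det3 w5 w6 w4 + det3 w6 w1 w4
      linarith [det3_rot w5 w6 w4, det3_rot w6 w4 w5, T456, det3_rot w6 w1 w4, T146]
    · show (0:ℝ) < det3 w5 w6 w5 + det3 w6 w1 w5
      linarith [det3_self13 w5 w6, det3_rot w6 w1 w5, T156]

/-- For x-sorted points `p 1, …, p n` in general position, counterclockwise
around `p 1`: if three consecutive triples starting at index `a` (with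
`2 ≤ a ≤ n - 4`) are all positively oriented, then
`{p 1, p a, p (a+1), p (a+2), p (a+3), p (a+4)}` is a 6-hole. -/
theorem three_consecutive_positive_triples_give_6hole (n : ℕ) (p : ℕ → ℝ × ℝ)
    (hgp : InGenPos (p '' Set.Icc 1 n))
    (hx : ∀ i j : ℕ, 1 ≤ i → i < j → j ≤ n → (p i).1 < (p j).1)
    (hccw : ∀ a b : ℕ, 2 ≤ a → a < b → b ≤ n → det3 (p 1) (p a) (p b) > 0)
    (a : ℕ) (ha : 2 ≤ a) (han : a + 4 ≤ n)
    (h1 : det3 (p a) (p (a + 1)) (p (a + 2)) > 0)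
    (h2 : det3 (p (a + 1)) (p (a + 2)) (p (a + 3)) > 0)
    (h3 : det3 (p (a + 2)) (p (a + 3)) (p (a + 4)) > 0) :
    IsHole 6 (p '' Set.Icc 1 n)
      {p 1, p a, p (a + 1), p (a + 2), p (a + 3), p (a + 4)} := by
  have hx12 : ((p 1)).1 < ((p a)).1 := hx 1 a (by omega) (by omega) (by omega)
  have hx23 : ((p a)).1 < ((p (a + 1))).1 := hx a (a + 1) (by omega) (by omega) (by omega)
  have hx34 : ((p (a + 1))).1 < ((p (a + 2))).1 := hx (a + 1) (a + 2) (by omega) (by omega) (by omega)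
  have hx45 : ((p (a + 2))).1 < ((p (a + 3))).1 := hx (a + 2) (a + 3) (by omega) (by omega) (by omega)
  have hx56 : ((p (a + 3))).1 < ((p (a + 4))).1 := hx (a + 3) (a + 4) (by omega) (by omega) (by omega)
  have T123 : 0 < det3 (p 1) (p a) (p (a + 1)) := hccw a (a + 1) (by omega) (by omega) (by omega)
  have T124 : 0 < det3 (p 1) (p a) (p (a + 2)) := hccw a (a + 2) (by omega) (by omega) (by omega)
  have T125 : 0 < det3 (p 1) (p a) (p (a + 3)) := hccw a (a + 3) (by omega) (by omega) (by omega)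
  have T126 : 0 < det3 (p 1) (p a) (p (a + 4)) := hccw a (a + 4) (by omega) (by omega) (by omega)
  have T134 : 0 < det3 (p 1) (p (a + 1)) (p (a + 2)) := hccw (a + 1) (a + 2) (by omega) (by omega) (by omega)
  have T135 : 0 < det3 (p 1) (p (a + 1)) (p (a + 3)) := hccw (a + 1) (a + 3) (by omega) (by omega) (by omega)
  have T136 : 0 < det3 (p 1) (p (a + 1)) (p (a + 4)) := hccw (a + 1) (a + 4) (by omega) (by omega) (by omega)
  have T145 : 0 < det3 (p 1) (p (a + 2)) (p (a + 3)) := hccw (a + 2) (a + 3) (by omega) (by omega) (by omega)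
  have T146 : 0 < det3 (p 1) (p (a + 2)) (p (a + 4)) := hccw (a + 2) (a + 4) (by omega) (by omega) (by omega)
  have T156 : 0 < det3 (p 1) (p (a + 3)) (p (a + 4)) := hccw (a + 3) (a + 4) (by omega) (by omega) (by omega)
  have T234 : 0 < det3 (p a) (p (a + 1)) (p (a + 2)) := h1
  have T345 : 0 < det3 (p (a + 1)) (p (a + 2)) (p (a + 3)) := h2
  have T456 : 0 < det3 (p (a + 2)) (p (a + 3)) (p (a + 4)) := h3
  have s1 := step4 (p a) (p (a + 1)) (p (a + 2)) (p (a + 3)) (by linarith) (by linarith) (by linarith) T234 T345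
  obtain ⟨T235, T245⟩ := s1
  have s2 := step4 (p (a + 1)) (p (a + 2)) (p (a + 3)) (p (a + 4)) (by linarith) (by linarith) (by linarith) T345 T456
  obtain ⟨T346, T356⟩ := s2
  have s3 := step4 (p a) (p (a + 1)) (p (a + 3)) (p (a + 4)) (by linarith) (by linarith) (by linarith) T235 T356
  obtain ⟨T236, T256⟩ := s3
  have s4 := step4 (p a) (p (a + 2)) (p (a + 3)) (p (a + 4)) (by linarith) (by linarith) (by linarith) T245 T456
  obtain ⟨T246, -⟩ := s4
  have hne : ∀ u v : ℝ × ℝ, u.1 < v.1 → u ≠ v := fun u v h he => absurd (he ▸ h) (lt_irrefl _)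
  have hsub : ({p 1, p a, p (a + 1), p (a + 2), p (a + 3), p (a + 4)} : Set (ℝ × ℝ)) ⊆ p '' Set.Icc 1 n := by
    intro x hxm
    simp only [Set.mem_insert_iff, Set.mem_singleton_iff] at hxm
    rcases hxm with rfl | rfl | rfl | rfl | rfl | rfl
    · exact ⟨1, Set.mem_Icc.mpr ⟨by omega, by omega⟩, rfl⟩
    · exact ⟨a, Set.mem_Icc.mpr ⟨by omega, by omega⟩, rfl⟩
    · exact ⟨(a + 1), Set.mem_Icc.mpr ⟨by omega, by omega⟩, rfl⟩
    · exact ⟨(a + 2), Set.mem_Icc.mpr ⟨by omega, by omega⟩, rfl⟩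
    · exact ⟨(a + 3), Set.mem_Icc.mpr ⟨by omega, by omega⟩, rfl⟩
    · exact ⟨(a + 4), Set.mem_Icc.mpr ⟨by omega, by omega⟩, rfl⟩
  have hfin : ({p 1, p a, p (a + 1), p (a + 2), p (a + 3), p (a + 4)} : Set (ℝ × ℝ)).Finite :=
    (((((Set.finite_singleton _).insert _).insert _).insert _).insert _).insert _
  have m1 : (p 1) ∉ ({p a, p (a + 1), p (a + 2), p (a + 3), p (a + 4)} : Set (ℝ × ℝ)) := by
    simp only [Set.mem_insert_iff, Set.mem_singleton_iff]
    push_neg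
    exact ⟨hne _ _ (by linarith), hne _ _ (by linarith), hne _ _ (by linarith), hne _ _ (by linarith), hne _ _ (by linarith)⟩
  have m2 : (p a) ∉ ({p (a + 1), p (a + 2), p (a + 3), p (a + 4)} : Set (ℝ × ℝ)) := by
    simp only [Set.mem_insert_iff, Set.mem_singleton_iff]
    push_neg
    exact ⟨hne _ _ (by linarith), hne _ _ (by linarith), hne _ _ (by linarith), hne _ _ (by linarith)⟩
  have m3 : (p (a + 1)) ∉ ({p (a + 2), p (a + 3), p (a + 4)} : Set (ℝ × ℝ)) := by
    simp only [Set.mem_insert_iff, Set.mem_singleton_iff]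
    push_neg
    exact ⟨hne _ _ (by linarith), hne _ _ (by linarith), hne _ _ (by linarith)⟩
  have m4 : (p (a + 2)) ∉ ({p (a + 3), p (a + 4)} : Set (ℝ × ℝ)) := by
    simp only [Set.mem_insert_iff, Set.mem_singleton_iff]
    push_neg
    exact ⟨hne _ _ (by linarith), hne _ _ (by linarith)⟩
  have m5 : (p (a + 3)) ∉ ({p (a + 4)} : Set (ℝ × ℝ)) := by
    simp only [Set.mem_insert_iff, Set.mem_singleton_iff]
    push_neg
    exact hne _ _ (by linarith)
  have hf2 : ({p a, p (a + 1), p (a + 2), p (a + 3), p (a + 4)} : Set (ℝ × ℝ)).Finite := (((((Set.finite_singleton _).insert _).insert _).insert _).insert _)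
  have hf3 : ({p (a + 1), p (a + 2), p (a + 3), p (a + 4)} : Set (ℝ × ℝ)).Finite := ((((Set.finite_singleton _).insert _).insert _).insert _)
  have hf4 : ({p (a + 2), p (a + 3), p (a + 4)} : Set (ℝ × ℝ)).Finite := (((Set.finite_singleton _).insert _).insert _)
  have hf5 : ({p (a + 3), p (a + 4)} : Set (ℝ × ℝ)).Finite := ((Set.finite_singleton _).insert _)
  have hf6 : ({p (a + 4)} : Set (ℝ × ℝ)).Finite := (Set.finite_singleton _)
  have hcard : ({p 1, p a, p (a + 1), p (a + 2), p (a + 3), p (a + 4)} : Set (ℝ × ℝ)).ncard = 6 := by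
    rw [Set.ncard_insert_of_notMem m1 hf2, Set.ncard_insert_of_notMem m2 hf3,
      Set.ncard_insert_of_notMem m3 hf4, Set.ncard_insert_of_notMem m4 hf5,
      Set.ncard_insert_of_notMem m5 hf6, Set.ncard_singleton]
  have hext := hexagon_extreme (p 1) (p a) (p (a + 1)) (p (a + 2)) (p (a + 3)) (p (a + 4)) T123 T124 T125 T126 T134 T135 T136 T145 T146 T156 T234 T235 T236 T245 T246 T256 T345 T346 T356 T456
  refine ⟨⟨hsub, hfin, hcard, hext⟩, ?_⟩
  intro q hq hqh
  obtain ⟨i, hiIcc, rfl⟩ := hq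
  rw [Set.mem_Icc] at hiIcc
  have hcases : i = 1 ∨ i = a ∨ i = a + 1 ∨ i = a + 2 ∨ i = a + 3 ∨ i = a + 4 ∨ (2 ≤ i ∧ i < a) ∨ (a + 4 < i ∧ i ≤ n) := by omega
  rcases hcases with rfl | rfl | rfl | rfl | rfl | rfl | ⟨hi2, hia⟩ | ⟨hia, hin⟩
  · simp only [Set.mem_insert_iff, Set.mem_singleton_iff]; tauto
  · simp only [Set.mem_insert_iff, Set.mem_singleton_iff]; tauto
  · simp only [Set.mem_insert_iff, Set.mem_singleton_iff]; tauto
  · simp only [Set.mem_insert_iff, Set.mem_singleton_iff]; tauto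
  · simp only [Set.mem_insert_iff, Set.mem_singleton_iff]; tauto
  · simp only [Set.mem_insert_iff, Set.mem_singleton_iff]; tauto
  · exfalso
    have hnn : 0 ≤ det3 (p 1) (p a) (p i) := by
      refine hull_nonneg (fun x => det3 (p 1) (p a) x) (fun t s x y h => det3_affine (p 1) (p a) t s x y h) _ ?_ (p i) hqh
      intro q hq
      simp only [Set.mem_insert_iff, Set.mem_singleton_iff] at hq
      rcases hq with rfl | rfl | rfl | rfl | rfl | rfl
      · exact le_of_eq (det3_self13 (p 1) (p a)).symm
      · exact le_of_eq (det3_self23 (p 1) (p a)).symm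
      · exact (T123).le
      · exact (T124).le
      · exact (T125).le
      · exact (T126).le
    have hlt := hccw i a (by omega) (by omega) (by omega)
    have hsw := det3_swap (p 1) (p a) (p i)
    linarith
  · exfalso
    have hnn : 0 ≤ det3 (p (a + 4)) (p 1) (p i) := by
      refine hull_nonneg (fun x => det3 (p (a + 4)) (p 1) x) (fun t s x y h => det3_affine (p (a + 4)) (p 1) t s x y h) _ ?_ (p i) hqh
      intro q hq
      simp only [Set.mem_insert_iff, Set.mem_singleton_iff] at hq
      rcases hq with rfl | rfl | rfl | rfl | rfl | rfl
      · exact le_of_eq (det3_self23 (p (a + 4)) (p 1)).symm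
      · linarith [det3_rot (p (a + 4)) (p 1) (p a), T126]
      · linarith [det3_rot (p (a + 4)) (p 1) (p (a + 1)), T136]
      · linarith [det3_rot (p (a + 4)) (p 1) (p (a + 2)), T146]
      · linarith [det3_rot (p (a + 4)) (p 1) (p (a + 3)), T156]
      · exact le_of_eq (det3_self13 (p (a + 4)) (p 1)).symm
    have hlt := hccw (a + 4) i (by omega) (by omega) (by omega)
    have hr := det3_rot (p (a + 4)) (p 1) (p i)
    have hsw := det3_swap (p 1) (p (a + 4)) (p i)
    linarith
end
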